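/- Geometric Cauchy–Binet identity: let f : EuclideanSpace ℝ (Fin k) → EuclideanSpace ℝ (Fin n) be a linear map and let s ⊆ EuclideanSpace ℝ (Fin k) be a measurable set. Then (μH[k](f '' s))² = Σ_γ (μH[k](π_γ '' (f '' s)))² in the extended nonnegative reals, where the sum runs over all subsets γ of {0,…,n−1} of cardinality k and π_γ : EuclideanSpace ℝ (Fin n) → EuclideanSpace ℝ (Fin k) is the coordinate projection sending x to the vector of its coordinates with indices in γ, listed in increasing order. -/

import Mathlib

open MeasureTheory Finset ENNReal NNReal Matrix

/-- The coordinate projection `π_γ : ℝⁿ → ℝᵏ` associated to a `k`-element subset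
`γ` of the coordinates: it sends `x` to the vector of its coordinates with indices
in `γ`, listed in increasing order. -/
noncomputable def coordProj {n k : ℕ} (γ : Finset (Fin n)) (h : γ.card = k) :
    EuclideanSpace ℝ (Fin n) → EuclideanSpace ℝ (Fin k) :=
  fun x => WithLp.toLp 2 (fun i => x (γ.orderEmbOfFin h i))


open Finset Equiv Equiv.Perm

namespace CBProof

variable {R : Type*} [CommRing R] {k n : ℕ}

local notation "ε" σ => ((Equiv.Perm.sign σ : ℤ) : R)

theorem sum_perm_eq_zero_of_not_injective (A : Matrix (Fin k) (Fin n) R)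
    (B : Matrix (Fin n) (Fin k) R) {p : Fin k → Fin n} (H : ¬Function.Injective p) :
    (∑ σ : Perm (Fin k), (ε σ) * ∏ x, A (σ x) (p x) * B (p x) x) = 0 := by
  obtain ⟨i, j, hpij, hij⟩ : ∃ i j, p i = p j ∧ i ≠ j := by
    rw [Function.Injective] at H
    push_neg at H
    obtain ⟨i, j, h1, h2⟩ := H
    exact ⟨i, j, h1, h2⟩
  exact
    Finset.sum_involution (fun σ _ => σ * Equiv.swap i j)
      (fun σ _ => by
        have : (∏ x, A (σ x) (p x)) = ∏ x, A ((σ * Equiv.swap i j) x) (p x) :=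
          Fintype.prod_equiv (Equiv.swap i j) _ _ (by simp [Equiv.apply_swap_eq_self hpij])
        simp [this, Equiv.Perm.sign_swap hij, -Equiv.Perm.sign_swap', Finset.prod_mul_distrib])
      (fun σ _ _ => (not_congr Equiv.mul_swap_eq_iff).mpr hij) (fun _ _ => Finset.mem_univ _)
      fun σ _ => Equiv.mul_swap_involutive i j σ

/-- **Cauchy–Binet formula**. -/
theorem orderEmbOfFin_congr {α : Type*} [LinearOrder α] {s t : Finset α} (hst : s = t)
    {k : ℕ} (hs : s.card = k) (ht : t.card = k) (i : Fin k) :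
    s.orderEmbOfFin hs i = t.orderEmbOfFin ht i := by subst hst; rfl

theorem image_orderEmbOfFin_comp_perm {k n : ℕ} (γ : Finset (Fin n)) (h : γ.card = k)
    (τ : Perm (Fin k)) :
    Finset.image ((γ.orderEmbOfFin h) ∘ τ) Finset.univ = γ := by
  apply Finset.coe_injective
  rw [Finset.coe_image, Finset.coe_univ, Set.image_univ, Set.range_comp]
  rw [Equiv.range_eq_univ, Set.image_univ, Finset.range_orderEmbOfFin]

theorem cauchyBinet (A : Matrix (Fin k) (Fin n) R) (B : Matrix (Fin n) (Fin k) R) :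
    (A * B).det = ∑ γ ∈ (Finset.powersetCard k (Finset.univ : Finset (Fin n))).attach,
      (A.submatrix id (γ.1.orderEmbOfFin (Finset.mem_powersetCard.mp γ.2).2)).det *
      (B.submatrix (γ.1.orderEmbOfFin (Finset.mem_powersetCard.mp γ.2).2) id).det := by
  have key : ∀ (M N : Matrix (Fin k) (Fin k) R),
      (∑ τ : Perm (Fin k), ∑ σ : Perm (Fin k), (ε σ) * ∏ i, M (σ i) (τ i) * N (τ i) i)
        = M.det * N.det := by
    intro M N
    calc
      (∑ τ : Perm (Fin k), ∑ σ : Perm (Fin k), (ε σ) * ∏ i, M (σ i) (τ i) * N (τ i) i)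
        = ∑ σ : Perm (Fin k), ∑ τ : Perm (Fin k),
            (∏ i, N (σ i) i) * (ε τ) * ∏ j, M (τ j) (σ j) := by
        simp only [mul_comm, mul_left_comm, Finset.prod_mul_distrib, mul_assoc]
      _ = ∑ σ : Perm (Fin k), ∑ τ : Perm (Fin k),
            (∏ i, N (σ i) i) * ((ε σ) * (ε τ)) * ∏ i, M (τ i) i :=
        Finset.sum_congr rfl fun σ _ =>
          Fintype.sum_equiv (Equiv.mulRight σ⁻¹) _ _ fun τ => by
            have : (∏ j, M (τ j) (σ j)) = ∏ j, M ((τ * σ⁻¹) j) j := by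
              rw [← (σ⁻¹ : _ ≃ _).prod_comp]
              simp only [Equiv.Perm.coe_mul, Equiv.Perm.coe_inv, Equiv.apply_symm_apply, Function.comp_apply]
            have h : (ε σ) * (ε (τ * σ⁻¹)) = ε τ :=
              calc
                (ε σ) * (ε (τ * σ⁻¹)) = ε (τ * σ⁻¹ * σ) := by
                  rw [mul_comm, Equiv.Perm.sign_mul (τ * σ⁻¹)]
                  simp only [Int.cast_mul, Units.val_mul]
                _ = ε τ := by simp only [inv_mul_cancel_right]
            simp_rw [Equiv.coe_mulRight, h]
            simp only [this]
      _ = M.det * N.det := by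
        simp only [Matrix.det_apply', Finset.mul_sum, mul_comm, mul_left_comm, mul_assoc]
  have step1 : (A * B).det = ∑ p : Fin k → Fin n, ∑ σ : Perm (Fin k),
      (ε σ) * ∏ i, A (σ i) (p i) * B (p i) i := by
    simp only [Matrix.det_apply', Matrix.mul_apply, Finset.prod_univ_sum, Finset.mul_sum,
      Fintype.piFinset_univ]
    rw [Finset.sum_comm]
  have step2 : (∑ p : Fin k → Fin n, ∑ σ : Perm (Fin k),
        (ε σ) * ∏ i, A (σ i) (p i) * B (p i) i)
      = ∑ p ∈ Finset.univ.filter (fun p : Fin k → Fin n => Function.Injective p),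
          ∑ σ : Perm (Fin k), (ε σ) * ∏ i, A (σ i) (p i) * B (p i) i :=
    (Finset.sum_subset (Finset.filter_subset _ _) fun p _ hp =>
      sum_perm_eq_zero_of_not_injective A B (by simpa using hp)).symm
  rw [step1, step2]
  rw [show (∑ γ ∈ (Finset.powersetCard k (Finset.univ : Finset (Fin n))).attach,
      (A.submatrix id (γ.1.orderEmbOfFin (Finset.mem_powersetCard.mp γ.2).2)).det *
      (B.submatrix (γ.1.orderEmbOfFin (Finset.mem_powersetCard.mp γ.2).2) id).det)
    = ∑ x ∈ (Finset.powersetCard k (Finset.univ : Finset (Fin n))).attach ×ˢ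
        (Finset.univ : Finset (Perm (Fin k))),
        ∑ σ : Perm (Fin k), (ε σ) * ∏ i,
          A (σ i) (x.1.1.orderEmbOfFin (Finset.mem_powersetCard.mp x.1.2).2 (x.2 i)) *
          B (x.1.1.orderEmbOfFin (Finset.mem_powersetCard.mp x.1.2).2 (x.2 i)) i from ?_]
  · -- the bijection between injective maps and pairs (γ, τ)
    refine (Finset.sum_bij
      (i := fun x _ => (x.1.1.orderEmbOfFin (Finset.mem_powersetCard.mp x.1.2).2) ∘ x.2)
      ?_ ?_ ?_ ?_).symm
    · -- maps into injective maps
      rintro ⟨⟨γ, hγ⟩, τ⟩ -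
      simp only [Finset.mem_filter, Finset.mem_univ, true_and]
      exact (γ.orderEmbOfFin (Finset.mem_powersetCard.mp hγ).2).injective.comp τ.injective
    · -- injectivity
      intro x hx y hy hpq
      obtain ⟨⟨γ₁, hγ₁⟩, τ₁⟩ := x
      obtain ⟨⟨γ₂, hγ₂⟩, τ₂⟩ := y
      simp only at hpq
      have hγ : γ₁ = γ₂ := by
        rw [← image_orderEmbOfFin_comp_perm γ₁ (Finset.mem_powersetCard.mp hγ₁).2 τ₁,
          ← image_orderEmbOfFin_comp_perm γ₂ (Finset.mem_powersetCard.mp hγ₂).2 τ₂, hpq]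
      refine Prod.ext (Subtype.ext hγ) (Equiv.ext fun a => ?_)
      have := congrFun hpq a
      simp only [Function.comp_apply] at this
      rw [orderEmbOfFin_congr hγ (Finset.mem_powersetCard.mp hγ₁).2
        (Finset.mem_powersetCard.mp hγ₂).2] at this
      exact (γ₂.orderEmbOfFin (Finset.mem_powersetCard.mp hγ₂).2).injective this
    · -- surjectivity
      intro p hp
      have hpinj : Function.Injective p := (Finset.mem_filter.mp hp).2
      set γp : Finset (Fin n) := Finset.image p Finset.univ with hγp_def
      have hγpmem : γp ∈ Finset.powersetCard k (Finset.univ : Finset (Fin n)) :=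
        Finset.mem_powersetCard.mpr ⟨Finset.subset_univ _, by
          rw [Finset.card_image_of_injective _ hpinj, Finset.card_univ, Fintype.card_fin]⟩
      have hc : γp.card = k := (Finset.mem_powersetCard.mp hγpmem).2
      have hmem : ∀ a : Fin k, p a ∈ γp := fun a => Finset.mem_image_of_mem p (Finset.mem_univ a)
      have hfninj : Function.Injective
          (fun a : Fin k => (γp.orderIsoOfFin hc).symm ⟨p a, hmem a⟩) := by
        intro a b hab
        apply hpinj
        have := congrArg (fun z => ((γp.orderIsoOfFin hc) z : Fin n)) hab
        simpa using this
      refine ⟨⟨⟨γp, hγpmem⟩, Equiv.ofBijective _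
        ((Finite.injective_iff_bijective).mp hfninj)⟩, Finset.mem_product.mpr
          ⟨Finset.mem_attach _ _, Finset.mem_univ _⟩, ?_⟩
      funext a
      simp only [Function.comp_apply, Equiv.ofBijective_apply]
      rw [← Finset.coe_orderIsoOfFin_apply, OrderIso.apply_symm_apply]
    · -- values agree
      intro x hx
      rfl
  · rw [Finset.sum_product]
    refine Finset.sum_congr rfl fun γ _ => ?_
    exact (key (A.submatrix id (γ.1.orderEmbOfFin (Finset.mem_powersetCard.mp γ.2).2))
      (B.submatrix (γ.1.orderEmbOfFin (Finset.mem_powersetCard.mp γ.2).2) id)).symm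

end CBProof


noncomputable def coordProjL {n k : ℕ} (γ : Finset (Fin n)) (h : γ.card = k) :
    EuclideanSpace ℝ (Fin n) →ₗ[ℝ] EuclideanSpace ℝ (Fin k) where
  toFun := coordProj γ h
  map_add' x y := rfl
  map_smul' c x := rfl

section Measure

theorem hausdorff_image_selfmap {k : ℕ}
    (g : EuclideanSpace ℝ (Fin k) →ₗ[ℝ] EuclideanSpace ℝ (Fin k))
    (s : Set (EuclideanSpace ℝ (Fin k))) :
    μH[k] (g '' s) = ENNReal.ofReal |LinearMap.det g| * μH[k] s := by
  have h : ((k : ℝ)) = ((Module.finrank ℝ (EuclideanSpace ℝ (Fin k)) : ℕ) : ℝ) := by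
    simp [finrank_euclideanSpace_fin]
  haveI : (μH[(k : ℝ)] : Measure (EuclideanSpace ℝ (Fin k))).IsAddHaarMeasure := by
    rw [h]; infer_instance
  exact Measure.addHaar_image_linearMap _ g s

theorem hausdorff_image_zero_of_not_injective {k n : ℕ}
    (f : EuclideanSpace ℝ (Fin k) →ₗ[ℝ] EuclideanSpace ℝ (Fin n))
    (hf : ¬ Function.Injective f) (s : Set (EuclideanSpace ℝ (Fin k))) :
    μH[k] (f '' s) = 0 := by
  have hrange : Module.finrank ℝ (LinearMap.range f) < k := by
    have hker : LinearMap.ker f ≠ ⊥ := by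
      simpa [LinearMap.ker_eq_bot] using hf
    have h1 := LinearMap.finrank_range_add_finrank_ker f
    rw [finrank_euclideanSpace_fin] at h1
    have h2 : 0 < Module.finrank ℝ (LinearMap.ker f) :=
      Module.finrank_pos_iff.mpr (Submodule.nontrivial_iff_ne_bot.mpr hker)
    omega
  set V := LinearMap.range f with hV
  have hsub : f '' s ⊆ (V : Set (EuclideanSpace ℝ (Fin n))) := by
    rintro x ⟨y, -, rfl⟩; exact LinearMap.mem_range_self f y
  refine le_antisymm (le_trans (measure_mono hsub) (le_of_eq ?_)) zero_le
  have himg : (V : Set (EuclideanSpace ℝ (Fin n))) =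
      Subtype.val '' (Set.univ : Set V) := by simp
  have hiso : μH[(k : ℝ)] (Subtype.val '' (Set.univ : Set V)) =
      μH[(k : ℝ)] (Set.univ : Set V) :=
    (isometry_subtype_coe).hausdorffMeasure_image (Or.inl (by positivity)) _
  have hdim : μH[(k : ℝ)] (Set.univ : Set V) = 0 := by
    have hlt : dimH (Set.univ : Set V) < ((k : NNReal) : ℝ≥0∞) := by
      rw [Real.dimH_univ_eq_finrank ↥V]
      exact_mod_cast hrange
    have := hausdorffMeasure_of_dimH_lt hlt
    simpa using this
  rw [himg, hiso, hdim]

end Measure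

theorem sq_hausdorff_image {k n : ℕ}
    (f : EuclideanSpace ℝ (Fin k) →ₗ[ℝ] EuclideanSpace ℝ (Fin n))
    (s : Set (EuclideanSpace ℝ (Fin k))) :
    (μH[k] (f '' s)) ^ 2
      = ENNReal.ofReal (LinearMap.det (LinearMap.adjoint f ∘ₗ f)) * (μH[k] s) ^ 2 := by
  by_cases hf : Function.Injective f
  · -- factor f = j ∘ A with j a linear isometry and A an endomorphism
    set V := LinearMap.range f with hVdef
    have hV : Module.finrank ℝ V = k := by
      rw [LinearMap.finrank_range_of_inj hf, finrank_euclideanSpace_fin]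
    let e : V ≃ₗᵢ[ℝ] EuclideanSpace ℝ (Fin k) :=
      ((stdOrthonormalBasis ℝ V).reindex (finCongr hV)).repr
    let j : EuclideanSpace ℝ (Fin k) →ₗᵢ[ℝ] EuclideanSpace ℝ (Fin n) :=
      V.subtypeₗᵢ.comp e.symm.toLinearIsometry
    let A : EuclideanSpace ℝ (Fin k) →ₗ[ℝ] EuclideanSpace ℝ (Fin k) :=
      e.toLinearEquiv.toLinearMap ∘ₗ f.rangeRestrict
    have hj : ∀ x, j (A x) = f x := fun x => by
      simp [j, A, e, LinearIsometry.comp_apply]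
    have h1 : f '' s = j '' (A '' s) := by
      rw [← Set.image_comp]
      exact Set.image_congr' fun x => (hj x).symm
    have hadj : LinearMap.adjoint f ∘ₗ f = LinearMap.adjoint A ∘ₗ A := by
      apply LinearMap.ext; intro x
      apply ext_inner_right ℝ; intro y
      simp only [LinearMap.comp_apply, LinearMap.adjoint_inner_left]
      rw [← hj x, ← hj y, j.inner_map_map]
    have hdA : LinearMap.det (LinearMap.adjoint A) = LinearMap.det A := by
      set b := EuclideanSpace.basisFun (Fin k) ℝ
      rw [← LinearMap.det_toMatrix b.toBasis (LinearMap.adjoint A),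
        ← LinearMap.det_toMatrix b.toBasis A, LinearMap.toMatrix_adjoint,
        Matrix.det_conjTranspose, star_trivial]
    have hdet : LinearMap.det (LinearMap.adjoint f ∘ₗ f) = (LinearMap.det A) ^ 2 := by
      rw [hadj, LinearMap.det_comp, hdA, sq]
    rw [h1, j.isometry.hausdorffMeasure_image (Or.inl (by positivity)) _,
      hausdorff_image_selfmap A s, hdet, mul_pow,
      ← ENNReal.ofReal_pow (abs_nonneg _), sq_abs]
  · rw [hausdorff_image_zero_of_not_injective f hf s]
    have hdet : LinearMap.det (LinearMap.adjoint f ∘ₗ f) = 0 := by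
      by_contra h
      refine hf fun x y hxy => ?_
      have hinj : Function.Injective (LinearMap.adjoint f ∘ₗ f) := by
        have := (LinearMap.equivOfDetNeZero _ h).injective
        intro a b hab
        exact this (by simpa using hab)
      exact hinj (by simp [LinearMap.comp_apply, hxy])
    simp [hdet]

theorem gram_det_eq_sum_sq {k n : ℕ}
    (f : EuclideanSpace ℝ (Fin k) →ₗ[ℝ] EuclideanSpace ℝ (Fin n)) :
    LinearMap.det (LinearMap.adjoint f ∘ₗ f)
      = ∑ γ ∈ (Finset.powersetCard k (Finset.univ : Finset (Fin n))).attach,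
          (LinearMap.det
            ((coordProjL γ.1 (Finset.mem_powersetCard.mp γ.2).2) ∘ₗ f)) ^ 2 := by
  set bk := EuclideanSpace.basisFun (Fin k) ℝ with hbk
  set bn := EuclideanSpace.basisFun (Fin n) ℝ with hbn
  set M := LinearMap.toMatrix bk.toBasis bn.toBasis f with hM
  have h1 : LinearMap.det (LinearMap.adjoint f ∘ₗ f) = (Mᵀ * M).det := by
    rw [← LinearMap.det_toMatrix bk.toBasis,
      LinearMap.toMatrix_comp bk.toBasis bn.toBasis, LinearMap.toMatrix_adjoint]
    congr 1
  rw [h1, CBProof.cauchyBinet]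
  refine Finset.sum_congr rfl fun γ _ => ?_
  have h2 : LinearMap.toMatrix bk.toBasis bk.toBasis
      ((coordProjL γ.1 (Finset.mem_powersetCard.mp γ.2).2) ∘ₗ f)
      = M.submatrix (γ.1.orderEmbOfFin (Finset.mem_powersetCard.mp γ.2).2) id := by
    ext i j
    simp [hbk, hbn, LinearMap.toMatrix_apply, hM, coordProjL, coordProj,
      EuclideanSpace.basisFun_repr, Matrix.submatrix_apply]
    rfl
  rw [← Matrix.transpose_submatrix, Matrix.det_transpose,
    ← LinearMap.det_toMatrix bk.toBasis, h2, sq]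

/-- **Geometric Cauchy–Binet identity**: for a linear map
`f : EuclideanSpace ℝ (Fin k) → EuclideanSpace ℝ (Fin n)` and a measurable set `s`,
the square of the `k`-dimensional Hausdorff measure of `f '' s` equals the sum, over
all `k`-element coordinate subsets `γ`, of the squares of the `k`-dimensional
Hausdorff measures of the coordinate projections `π_γ '' (f '' s)`. -/

theorem hausdorff_measure_sq_eq_sum_proj_sq (k n : ℕ)
    (f : EuclideanSpace ℝ (Fin k) →ₗ[ℝ] EuclideanSpace ℝ (Fin n))
    (s : Set (EuclideanSpace ℝ (Fin k))) (hs : MeasurableSet s) :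
    (μH[k] (f '' s)) ^ 2 =
      ∑ γ ∈ (Finset.powersetCard k (Finset.univ : Finset (Fin n))).attach,
        (μH[k] (coordProj γ.1 (Finset.mem_powersetCard.mp γ.2).2 '' (f '' s))) ^ 2 := by
  rw [sq_hausdorff_image f s, gram_det_eq_sum_sq f,
    ENNReal.ofReal_sum_of_nonneg (fun _ _ => sq_nonneg _), Finset.sum_mul]
  refine Finset.sum_congr rfl fun γ _ => ?_
  have hcomp : coordProj γ.1 (Finset.mem_powersetCard.mp γ.2).2 '' (f '' s)
      = ((coordProjL γ.1 (Finset.mem_powersetCard.mp γ.2).2) ∘ₗ f) '' s := by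
    rw [← Set.image_comp]; rfl
  rw [hcomp, hausdorff_image_selfmap, mul_pow, ← ENNReal.ofReal_pow (abs_nonneg _), sq_abs]
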